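/- Let τ ∈ ℝ^n_{>0}, and define the mixed norm ‖x‖_{τ+∞} := ‖x‖_∞ + C‖x‖_τ for a constant C > 0, where ‖x‖_τ² = Σ_i τ_i x_i². Let ‖·‖_* be its dual norm. Let Φ(v) = Σ_i (exp(λ(v_i−1)) + exp(−λ(v_i−1))) with λ > 0. If v₀, v₁ ∈ ℝ^n satisfy ‖v₁ − v₀‖_{τ+∞} ≤ δ ≤ 1/(5λ), then Φ(v₁) ≤ Φ(v₀) + δ·e^{δλ}·(‖∇Φ(v₀)‖_* + λn). -/

import Mathlib

/-- The mixed norm `‖x‖_{τ+∞} = ‖x‖_∞ + C‖x‖_τ`. -/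
noncomputable def mixedNorm (n : ℕ) (τ : Fin n → ℝ) (C : ℝ) (x : Fin n → ℝ) : ℝ :=
  ‖x‖ + C * Real.sqrt (∑ i, τ i * x i ^ 2)

/-- The dual norm of the mixed norm. -/
noncomputable def dualNorm (n : ℕ) (τ : Fin n → ℝ) (C : ℝ) (u : Fin n → ℝ) : ℝ :=
  sSup {y | ∃ w : Fin n → ℝ, mixedNorm n τ C w ≤ 1 ∧ y = ∑ i, u i * w i}

section AuxLemmas
open Real

lemma aux_sinh (x : ℝ) (hx : 0 ≤ x) : exp x - exp (-x) ≤ 2 * x * exp x := by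
  have h1 : (-(2*x)) + 1 ≤ exp (-(2*x)) := Real.add_one_le_exp _
  have h2 : exp x * exp (-(2*x)) = exp (-x) := by rw [← Real.exp_add]; ring_nf
  nlinarith [Real.exp_pos x]

lemma aux_exp1 (b : ℝ) : exp b - 1 ≤ b * exp b := by
  have h1 : (-b) + 1 ≤ exp (-b) := Real.add_one_le_exp _
  have h2 : exp b * exp (-b) = 1 := by rw [← Real.exp_add]; simp
  nlinarith [Real.exp_pos b]

lemma aux_shift1 (a b : ℝ) :
    exp (a+b) - exp (-(a+b)) ≤ exp |b| * (|exp a - exp (-a)| + 2 * |b|) := by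
  have hb1 : exp b ≤ exp |b| := Real.exp_le_exp.mpr (le_abs_self b)
  have hnb1 : exp (-b) ≤ exp |b| := Real.exp_le_exp.mpr (neg_le_abs b)
  have hsb : exp b - exp (-b) ≤ 2 * |b| * exp |b| := by
    rcases le_or_gt 0 b with hb | hb
    · have := aux_sinh b hb
      rw [abs_of_nonneg hb]; linarith
    · have h0 : exp b - exp (-b) ≤ 0 := by
        have : exp b ≤ exp (-b) := Real.exp_le_exp.mpr (by linarith)
        linarith
      have : 0 ≤ 2 * |b| * exp |b| := by positivity
      linarith
  rcases le_or_gt 0 a with ha | ha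
  · have hdecomp : exp (a+b) - exp (-(a+b)) =
        exp b * (exp a - exp (-a)) + (exp b - exp (-b)) * exp (-a) := by
      rw [show a + b = b + a by ring, Real.exp_add,
        show -(b+a) = -b + -a by ring, Real.exp_add]
      ring
    have hea : exp (-a) ≤ 1 := Real.exp_le_one_iff.mpr (by linarith)
    have hS0 : 0 ≤ exp a - exp (-a) := by
      have : exp (-a) ≤ exp a := Real.exp_le_exp.mpr (by linarith)
      linarith
    have hS : exp a - exp (-a) = |exp a - exp (-a)| := (abs_of_nonneg hS0).symm
    have t1 : exp b * (exp a - exp (-a)) ≤ exp |b| * |exp a - exp (-a)| := by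
      rw [← hS]; exact mul_le_mul_of_nonneg_right hb1 hS0
    have t2 : (exp b - exp (-b)) * exp (-a) ≤ 2 * |b| * exp |b| := by
      rcases le_or_gt 0 (exp b - exp (-b)) with h | h
      · calc (exp b - exp (-b)) * exp (-a) ≤ (exp b - exp (-b)) * 1 :=
              mul_le_mul_of_nonneg_left hea h
          _ ≤ 2 * |b| * exp |b| := by linarith
      · have : (exp b - exp (-b)) * exp (-a) ≤ 0 :=
          mul_nonpos_of_nonpos_of_nonneg h.le (Real.exp_pos _).le
        have h2 : (0:ℝ) ≤ 2 * |b| * exp |b| := by positivity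
        linarith
    rw [hdecomp]; nlinarith
  · have hdecomp : exp (a+b) - exp (-(a+b)) =
        exp (-b) * (exp a - exp (-a)) + (exp b - exp (-b)) * exp a := by
      rw [show a + b = b + a by ring, Real.exp_add,
        show -(b+a) = -b + -a by ring, Real.exp_add]
      ring
    have hea : exp a ≤ 1 := Real.exp_le_one_iff.mpr (by linarith)
    have hS0 : exp a - exp (-a) ≤ 0 := by
      have : exp a ≤ exp (-a) := Real.exp_le_exp.mpr (by linarith)
      linarith
    have t1 : exp (-b) * (exp a - exp (-a)) ≤ exp |b| * |exp a - exp (-a)| := by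
      have : exp (-b) * (exp a - exp (-a)) ≤ 0 :=
        mul_nonpos_of_nonneg_of_nonpos (Real.exp_pos _).le hS0
      have h2 : (0:ℝ) ≤ exp |b| * |exp a - exp (-a)| := by positivity
      linarith
    have t2 : (exp b - exp (-b)) * exp a ≤ 2 * |b| * exp |b| := by
      rcases le_or_gt 0 (exp b - exp (-b)) with h | h
      · calc (exp b - exp (-b)) * exp a ≤ (exp b - exp (-b)) * 1 :=
              mul_le_mul_of_nonneg_left hea h
          _ ≤ 2 * |b| * exp |b| := by linarith
      · have : (exp b - exp (-b)) * exp a ≤ 0 :=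
          mul_nonpos_of_nonpos_of_nonneg h.le (Real.exp_pos _).le
        have h2 : (0:ℝ) ≤ 2 * |b| * exp |b| := by positivity
        linarith
    rw [hdecomp]; nlinarith

lemma aux_shift (a b : ℝ) :
    |exp (a+b) - exp (-(a+b))| ≤ exp |b| * (|exp a - exp (-a)| + 2 * |b|) := by
  rw [abs_le]
  refine ⟨?_, aux_shift1 a b⟩
  have := aux_shift1 (-a) (-b)
  rw [show -a + -b = -(a+b) by ring] at this
  simp only [neg_neg] at this
  rw [abs_neg, abs_sub_comm (exp (-a))] at this
  linarith

lemma aux_key (a b : ℝ) :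
    (exp (a+b) + exp (-(a+b))) - (exp a + exp (-a)) ≤
      |b| * exp |b| * (|exp a - exp (-a)| + 2 * |b|) := by
  have h1 : exp (a+b) - exp a ≤ b * exp (a+b) := by
    have h := mul_le_mul_of_nonneg_left (aux_exp1 b) (Real.exp_pos a).le
    have h2 : exp (a+b) = exp a * exp b := Real.exp_add a b
    rw [h2]; nlinarith
  have h2 : exp (-(a+b)) - exp (-a) ≤ -b * exp (-(a+b)) := by
    have h := mul_le_mul_of_nonneg_left (aux_exp1 (-b)) (Real.exp_pos (-a)).le
    have h2 : exp (-(a+b)) = exp (-a) * exp (-b) := by rw [← Real.exp_add]; ring_nf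
    rw [h2]; nlinarith
  have h3 : b * (exp (a+b) - exp (-(a+b))) ≤ |b| * |exp (a+b) - exp (-(a+b))| := by
    calc b * (exp (a+b) - exp (-(a+b))) ≤ |b * (exp (a+b) - exp (-(a+b)))| := le_abs_self _
    _ = |b| * |exp (a+b) - exp (-(a+b))| := abs_mul _ _
  have h4 := mul_le_mul_of_nonneg_left (aux_shift a b) (abs_nonneg b)
  nlinarith


lemma aux_sign_mul_self (x : ℝ) : x * Real.sign x = |x| := by
  rcases lt_trichotomy x 0 with h | h | h
  · rw [Real.sign_of_neg h, abs_of_neg h]; ring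
  · simp [h]
  · rw [Real.sign_of_pos h, abs_of_pos h]; ring

lemma aux_abs_sign_le (x : ℝ) : |Real.sign x| ≤ 1 := by
  rcases lt_trichotomy x 0 with h | h | h
  · rw [Real.sign_of_neg h]; norm_num
  · simp [h]
  · rw [Real.sign_of_pos h]; norm_num

lemma aux_norm_le_mixed (n : ℕ) (τ : Fin n → ℝ) (C : ℝ) (hC : 0 ≤ C) (x : Fin n → ℝ) :
    ‖x‖ ≤ mixedNorm n τ C x := by
  have : 0 ≤ C * Real.sqrt (∑ i, τ i * x i ^ 2) := by positivity
  unfold mixedNorm; linarith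

lemma aux_pairing (n : ℕ) (τ : Fin n → ℝ) (hτ : ∀ i, 0 < τ i) (C : ℝ) (hC : 0 < C)
    (u h : Fin n → ℝ) (δ : ℝ) (hδpos : 0 < δ)
    (hmove : mixedNorm n τ C h ≤ δ) :
    ∑ i, |h i| * |u i| ≤ δ * dualNorm n τ C u := by
  set S := {y | ∃ w : Fin n → ℝ, mixedNorm n τ C w ≤ 1 ∧ y = ∑ i, u i * w i} with hS
  -- bounded above
  have hbdd : BddAbove S := by
    refine ⟨∑ i, |u i|, ?_⟩
    rintro y ⟨w, hw1, rfl⟩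
    have hwle : ∀ i, |w i| ≤ 1 := by
      intro i
      calc |w i| = ‖w i‖ := (Real.norm_eq_abs _).symm
        _ ≤ ‖w‖ := norm_le_pi_norm w i
        _ ≤ mixedNorm n τ C w := aux_norm_le_mixed n τ C hC.le w
        _ ≤ 1 := hw1
    refine Finset.sum_le_sum fun i _ => ?_
    calc u i * w i ≤ |u i * w i| := le_abs_self _
      _ = |u i| * |w i| := abs_mul _ _
      _ ≤ |u i| * 1 := mul_le_mul_of_nonneg_left (hwle i) (abs_nonneg _)
      _ = |u i| := mul_one _
  -- the test vector
  set w : Fin n → ℝ := fun i => Real.sign (u i) * |h i| / δ with hw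
  have hwmem : mixedNorm n τ C w ≤ 1 := by
    have h1 : ‖w‖ ≤ δ⁻¹ * ‖h‖ := by
      rw [pi_norm_le_iff_of_nonneg (by positivity)]
      intro i
      rw [Real.norm_eq_abs]
      have : |w i| = |Real.sign (u i)| * |h i| * δ⁻¹ := by
        rw [hw]
        simp only [abs_div, abs_mul, abs_abs, abs_of_pos hδpos]
        ring
      rw [this]
      have h2 : |h i| ≤ ‖h‖ := by rw [← Real.norm_eq_abs]; exact norm_le_pi_norm h i
      have hsg := aux_abs_sign_le (u i)
      have hgg : |Real.sign (u i)| * |h i| * δ⁻¹ ≤ 1 * ‖h‖ * δ⁻¹ := by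
        gcongr
      linarith
    have h2 : Real.sqrt (∑ i, τ i * w i ^ 2) ≤ δ⁻¹ * Real.sqrt (∑ i, τ i * h i ^ 2) := by
      have hsum : ∑ i, τ i * w i ^ 2 ≤ δ⁻¹ ^ 2 * ∑ i, τ i * h i ^ 2 := by
        rw [Finset.mul_sum]
        refine Finset.sum_le_sum fun i _ => ?_
        have hwi : w i ^ 2 ≤ δ⁻¹ ^ 2 * h i ^ 2 := by
          rw [hw]
          have hs := aux_abs_sign_le (u i)
          have : (Real.sign (u i))^2 ≤ 1 := by nlinarith [abs_nonneg (Real.sign (u i)), sq_abs (Real.sign (u i))]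
          have hd : (Real.sign (u i) * |h i| / δ)^2 = (Real.sign (u i))^2 * (h i)^2 * δ⁻¹^2 := by
            rw [div_pow, mul_pow, sq_abs]
            field_simp
          rw [hd]
          have := mul_le_mul_of_nonneg_right this (show (0:ℝ) ≤ h i ^ 2 * δ⁻¹ ^ 2 by positivity)
          nlinarith
        have := mul_le_mul_of_nonneg_left hwi (hτ i).le
        nlinarith
      calc Real.sqrt (∑ i, τ i * w i ^ 2) ≤ Real.sqrt (δ⁻¹ ^ 2 * ∑ i, τ i * h i ^ 2) :=
            Real.sqrt_le_sqrt hsum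
        _ = δ⁻¹ * Real.sqrt (∑ i, τ i * h i ^ 2) := by
            rw [Real.sqrt_mul (sq_nonneg _), Real.sqrt_sq (by positivity)]
    have : mixedNorm n τ C w ≤ δ⁻¹ * mixedNorm n τ C h := by
      unfold mixedNorm
      have := mul_le_mul_of_nonneg_left h2 hC.le
      rw [mul_add]
      calc ‖w‖ + C * Real.sqrt (∑ i, τ i * w i ^ 2)
          ≤ δ⁻¹ * ‖h‖ + C * (δ⁻¹ * Real.sqrt (∑ i, τ i * h i ^ 2)) := by linarith
        _ = δ⁻¹ * ‖h‖ + δ⁻¹ * (C * Real.sqrt (∑ i, τ i * h i ^ 2)) := by ring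
    calc mixedNorm n τ C w ≤ δ⁻¹ * mixedNorm n τ C h := this
      _ ≤ δ⁻¹ * δ := mul_le_mul_of_nonneg_left hmove (by positivity)
      _ = 1 := by field_simp
  have hval : (∑ i, u i * w i) = δ⁻¹ * ∑ i, |h i| * |u i| := by
    rw [Finset.mul_sum]
    refine Finset.sum_congr rfl fun i _ => ?_
    rw [hw]
    field_simp
    rw [show u i * Real.sign (u i) * |h i| = (u i * Real.sign (u i)) * |h i| by ring,
      aux_sign_mul_self]
    ring
  have hmem : δ⁻¹ * ∑ i, |h i| * |u i| ∈ S := ⟨w, hwmem, hval.symm⟩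
  have hle : δ⁻¹ * ∑ i, |h i| * |u i| ≤ sSup S := le_csSup hbdd hmem
  have : dualNorm n τ C u = sSup S := rfl
  rw [this]
  calc ∑ i, |h i| * |u i| = δ * (δ⁻¹ * ∑ i, |h i| * |u i|) := by field_simp
    _ ≤ δ * sSup S := mul_le_mul_of_nonneg_left hle hδpos.le

end AuxLemmas

section Main
open Real
/-- Potential increase: if `v₁` is within mixed-norm distance `δ ≤ 1/(5λ)` of `v₀`, then
`Φ(v₁) ≤ Φ(v₀) + δ e^{δλ}(‖∇Φ(v₀)‖_* + λn)`. -/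
theorem stmt4 (n : ℕ) (τ : Fin n → ℝ) (hτ : ∀ i, 0 < τ i) (C : ℝ) (hC : 0 < C)
    (lam : ℝ) (hlam : 0 < lam) (δ : ℝ) (v₀ v₁ : Fin n → ℝ)
    (hmove : mixedNorm n τ C (v₁ - v₀) ≤ δ) (hδ : δ ≤ 1 / (5 * lam)) :
    ∑ i, (Real.exp (lam * (v₁ i - 1)) + Real.exp (-(lam * (v₁ i - 1)))) ≤
      ∑ i, (Real.exp (lam * (v₀ i - 1)) + Real.exp (-(lam * (v₀ i - 1)))) +
        δ * Real.exp (δ * lam) *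
          (dualNorm n τ C
              (fun i => lam * (Real.exp (lam * (v₀ i - 1)) - Real.exp (-(lam * (v₀ i - 1))))) +
            lam * n) := by
  set u : Fin n → ℝ :=
    fun i => lam * (Real.exp (lam * (v₀ i - 1)) - Real.exp (-(lam * (v₀ i - 1)))) with hu
  have hδ0 : 0 ≤ δ := le_trans (by unfold mixedNorm; positivity) hmove
  have hhi : ∀ i, |v₁ i - v₀ i| ≤ δ := by
    intro i
    calc |v₁ i - v₀ i| = ‖(v₁ - v₀) i‖ := by rw [Pi.sub_apply, Real.norm_eq_abs]
      _ ≤ ‖v₁ - v₀‖ := norm_le_pi_norm _ i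
      _ ≤ mixedNorm n τ C (v₁ - v₀) := aux_norm_le_mixed n τ C hC.le _
      _ ≤ δ := hmove
  rcases eq_or_lt_of_le hδ0 with hzero | hδpos
  · have hv : ∀ i, v₁ i = v₀ i := by
      intro i
      have h1 := hhi i
      rw [← hzero] at h1
      have := abs_nonpos_iff.mp h1
      linarith [sub_eq_zero.mp this]
    have heq : (∑ i, (Real.exp (lam * (v₁ i - 1)) + Real.exp (-(lam * (v₁ i - 1))))) =
        ∑ i, (Real.exp (lam * (v₀ i - 1)) + Real.exp (-(lam * (v₀ i - 1)))) :=
      Finset.sum_congr rfl fun i _ => by rw [hv i]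
    rw [heq, ← hzero]
    simp
  · set E := Real.exp (δ * lam) with hE
    have hEpos : 0 < E := Real.exp_pos _
    have hcoord : ∀ i ∈ Finset.univ,
        (Real.exp (lam * (v₁ i - 1)) + Real.exp (-(lam * (v₁ i - 1)))) ≤
        (Real.exp (lam * (v₀ i - 1)) + Real.exp (-(lam * (v₀ i - 1)))) +
          (E * (|v₁ i - v₀ i| * |u i|) + E * (2 * lam ^ 2 * δ ^ 2)) := by
      intro i _
      have hkey := aux_key (lam * (v₀ i - 1)) (lam * (v₁ i - v₀ i))
      rw [show lam * (v₀ i - 1) + lam * (v₁ i - v₀ i) = lam * (v₁ i - 1) by ring] at hkey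
      have habs : |lam * (v₁ i - v₀ i)| = lam * |v₁ i - v₀ i| := by
        rw [abs_mul, abs_of_pos hlam]
      rw [habs] at hkey
      set t := |v₁ i - v₀ i| with ht
      set Sa := |Real.exp (lam * (v₀ i - 1)) - Real.exp (-(lam * (v₀ i - 1)))| with hSa
      have ht0 : 0 ≤ t := abs_nonneg _
      have htδ : t ≤ δ := hhi i
      have hSa0 : 0 ≤ Sa := abs_nonneg _
      have hEE : Real.exp (lam * t) ≤ E := by
        rw [hE]
        exact Real.exp_le_exp.mpr (by nlinarith)
      have hui : |u i| = lam * Sa := by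
        rw [hu, abs_mul, abs_of_pos hlam]
      have hA := mul_le_mul_of_nonneg_right hEE
        (mul_nonneg (mul_nonneg hlam.le ht0) hSa0)
      have hB := mul_le_mul_of_nonneg_right hEE
        (show (0:ℝ) ≤ 2 * (lam * t) * (lam * t) by positivity)
      have hC2 : t ^ 2 ≤ δ ^ 2 := by nlinarith
      have hD := mul_le_mul_of_nonneg_left hC2 (show (0:ℝ) ≤ 2 * lam ^ 2 * E by positivity)
      rw [hui]
      nlinarith [hkey, hA, hB, hD, Real.exp_pos (lam * t)]
    have hsum := Finset.sum_le_sum hcoord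
    simp only [Finset.sum_add_distrib, ← Finset.mul_sum, Finset.sum_const,
      Finset.card_univ, Fintype.card_fin, nsmul_eq_mul] at hsum
    have hP : ∑ i, |v₁ i - v₀ i| * |u i| ≤ δ * dualNorm n τ C u := by
      have := aux_pairing n τ hτ C hC u (v₁ - v₀) δ hδpos hmove
      simpa [Pi.sub_apply] using this
    have h5 : δ * (5 * lam) ≤ 1 := (le_div_iff₀ (by positivity)).mp hδ
    have h2ld : 2 * lam * δ ≤ 1 := by nlinarith [mul_nonneg hlam.le hδ0]
    simp only [Finset.sum_add_distrib]
    have hDn := mul_le_mul_of_nonneg_left hP hEpos.le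
    have hnn : (n : ℝ) * (E * (2 * lam ^ 2 * δ ^ 2)) ≤ δ * E * (lam * n) := by
      have hpos : (0:ℝ) ≤ lam * δ * E * (n : ℝ) := by positivity
      nlinarith [mul_nonneg (show (0:ℝ) ≤ 1 - 2 * lam * δ by linarith) hpos]
    linarith [hsum, hDn, hnn]

end Main
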